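/- For p, q ≥ 1 the full twist satisfies the decomposition ∇_{p+q} = ∇_{1,p} ∇_{p+1,p+q} · (σ_p σ_{p+1} ⋯ σ_{p+q−1})(σ_{p−1} σ_p ⋯ σ_{p+q−2}) ⋯ (σ_1 σ_2 ⋯ σ_q) · (σ_q σ_{q+1} ⋯ σ_{q+p−1})(σ_{q−1} σ_q ⋯ σ_{q+p−2}) ⋯ (σ_1 σ_2 ⋯ σ_p) in B_{p+q}. -/
import Mathlib


/-- The braid relations on generators indexed by `Fin m` (generator `i`
represents the standard generator `σ_{i+1}` of the braid group `B_{m+1}`). -/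
def braidRels (m : ℕ) : Set (FreeGroup (Fin m)) :=
  { r | (∃ i j : Fin m, (i : ℕ) + 1 < (j : ℕ) ∧
          r = FreeGroup.of i * FreeGroup.of j * (FreeGroup.of i)⁻¹ * (FreeGroup.of j)⁻¹) ∨
        (∃ i j : Fin m, (i : ℕ) + 1 = (j : ℕ) ∧
          r = FreeGroup.of i * FreeGroup.of j * FreeGroup.of i *
              (FreeGroup.of j)⁻¹ * (FreeGroup.of i)⁻¹ * (FreeGroup.of j)⁻¹) }

/-- The braid group `B_n`, presented with `n-1` standard generators. -/
abbrev BraidGroup (n : ℕ) := PresentedGroup (braidRels (n - 1))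

/-- The standard generator `σ_{i+1}` (0-based index `i`). -/
def σ {n : ℕ} (i : Fin (n - 1)) : BraidGroup n := PresentedGroup.of i

/-- A positive band in `B_n`: any conjugate of a standard generator. -/
def PositiveBand {n : ℕ} (b : BraidGroup n) : Prop := ∃ i : Fin (n - 1), IsConj (σ i) b

/-- The monoid of quasipositive braids in `B_n`. -/
def Qp (n : ℕ) : Submonoid (BraidGroup n) := Submonoid.closure {b | PositiveBand b}
/-- The standard generator `σ_{k+1}` of `B_n` (0-based index `k`), as a total
function (out-of-range indices map to the identity). -/
def gen (n : ℕ) (k : ℕ) : BraidGroup n :=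
  if h : k < n - 1 then σ ⟨k, h⟩ else 1

/-- The word `(σ_{i+1} ⋯ σ_{i+len})(σ_{i+1} ⋯ σ_{i+len−1}) ⋯ σ_{i+1}` in `B_n`,
built from the `len` consecutive generators with 0-based indices
`off, off+1, …, off+len−1`. -/
def halfTwist (n off len : ℕ) : BraidGroup n :=
  (((List.range len).reverse.map
      (fun k => (List.range (k + 1)).map (fun t => gen n (off + t)))).flatten).prod

/-- `∇_{i,j} = ι_{i,j}(∇_{j−i+1})`: the full twist on strings `i, …, j` of `B_n`,
using generators `σ_i, …, σ_{j−1}` (0-based indices `i−1, …, j−2`). -/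
def fullTwistOn (n off len : ℕ) : BraidGroup n := halfTwist n off len * halfTwist n off len

lemma rel_eq_one {m : ℕ} {r : FreeGroup (Fin m)} (hr : r ∈ braidRels m) :
    PresentedGroup.mk (braidRels m) r = 1 :=
  (QuotientGroup.eq_one_iff r).mpr (Subgroup.subset_normalClosure hr)

lemma braid_comm {n : ℕ} (j k : ℕ) (h : j + 2 ≤ k) :
    gen n j * gen n k = gen n k * gen n j := by
  unfold gen
  split_ifs with h1 h2 h2
  · -- both in range
    have hr : (FreeGroup.of (⟨j, h1⟩ : Fin (n-1)) * FreeGroup.of (⟨k, h2⟩ : Fin (n-1)) *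
        (FreeGroup.of (⟨j, h1⟩ : Fin (n-1)))⁻¹ * (FreeGroup.of (⟨k, h2⟩ : Fin (n-1)))⁻¹)
        ∈ braidRels (n-1) := by
      left; exact ⟨⟨j, h1⟩, ⟨k, h2⟩, by simp; omega, rfl⟩
    have := rel_eq_one hr
    simp only [map_mul, map_inv] at this
    have h1' := mul_inv_eq_one.mp this
    have h2' := mul_inv_eq_iff_eq_mul.mp h1'
    exact h2'
  · simp
  · simp
  · simp

lemma braid_rel {n : ℕ} (k : ℕ) (h : k + 1 < n - 1) :
    gen n k * gen n (k+1) * gen n k = gen n (k+1) * gen n k * gen n (k+1) := by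
  have hk : k < n - 1 := by omega
  unfold gen
  rw [dif_pos hk, dif_pos h]
  have hr : (FreeGroup.of (⟨k, hk⟩ : Fin (n-1)) * FreeGroup.of (⟨k+1, h⟩ : Fin (n-1)) *
      FreeGroup.of (⟨k, hk⟩ : Fin (n-1)) * (FreeGroup.of (⟨k+1, h⟩ : Fin (n-1)))⁻¹ *
      (FreeGroup.of (⟨k, hk⟩ : Fin (n-1)))⁻¹ * (FreeGroup.of (⟨k+1, h⟩ : Fin (n-1)))⁻¹)
      ∈ braidRels (n-1) := by
    right; exact ⟨⟨k, hk⟩, ⟨k+1, h⟩, rfl, rfl⟩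
  have := rel_eq_one hr
  simp only [map_mul, map_inv] at this
  set a := PresentedGroup.mk (braidRels (n-1)) (FreeGroup.of (⟨k, hk⟩ : Fin (n-1)))
  set b := PresentedGroup.mk (braidRels (n-1)) (FreeGroup.of (⟨k+1, h⟩ : Fin (n-1)))
  show a * b * a = b * a * b
  have h1' := mul_inv_eq_one.mp this
  have h2' := mul_inv_eq_iff_eq_mul.mp h1'
  exact mul_inv_eq_iff_eq_mul.mp h2'
-- continuing after braid_comm / braid_rel

private lemma mls {M : Type*} [Semigroup M] {a b b' a' : M} (h : a * b = b' * a') (c : M) :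
    a * (b * c) = b' * (a' * c) := by rw [← mul_assoc, h, mul_assoc]

private lemma mls3 {M : Type*} [Semigroup M] {a b c a' b' c' : M}
    (h : a * (b * c) = a' * (b' * c')) (d : M) :
    a * (b * (c * d)) = a' * (b' * (c' * d)) := by
  rw [show a * (b * (c * d)) = (a * (b * c)) * d by simp only [mul_assoc], h]
  simp only [mul_assoc]

private lemma mls2 {M : Type*} [Semigroup M] {a b c d e : M}
    (h : a * (b * c) = d * e) (x : M) : a * (b * (c * x)) = d * (e * x) := by
  rw [show a * (b * (c * x)) = (a * (b * c)) * x by simp only [mul_assoc], h]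
  simp only [mul_assoc]

def asc (n i : ℕ) : ℕ → BraidGroup n
  | 0 => 1
  | m+1 => asc n i m * gen n (i+m)

def dsc (n i : ℕ) : ℕ → BraidGroup n
  | 0 => 1
  | m+1 => gen n (i+m) * dsc n i m

def HT (n off : ℕ) : ℕ → BraidGroup n
  | 0 => 1
  | m+1 => asc n off (m+1) * HT n off m

def Aw (n t : ℕ) : ℕ → BraidGroup n
  | 0 => 1
  | s+1 => asc n s t * Aw n t s

def SA (n t : ℕ) : ℕ → BraidGroup n
  | 0 => 1
  | s+1 => asc n (s+1) t * SA n t s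

def Ew (n t : ℕ) : ℕ → ℕ → BraidGroup n
  | _, 0 => 1
  | c, s+1 => dsc n c t * Ew n t (c+1) s

lemma asc_zero (n i : ℕ) : asc n i 0 = 1 := rfl
lemma asc_succ (n i m : ℕ) : asc n i (m+1) = asc n i m * gen n (i+m) := rfl
lemma dsc_zero (n i : ℕ) : dsc n i 0 = 1 := rfl
lemma dsc_succ (n i m : ℕ) : dsc n i (m+1) = gen n (i+m) * dsc n i m := rfl
lemma HT_zero (n off : ℕ) : HT n off 0 = 1 := rfl
lemma HT_succ (n off m : ℕ) : HT n off (m+1) = asc n off (m+1) * HT n off m := rfl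
lemma Aw_zero (n t : ℕ) : Aw n t 0 = 1 := rfl
lemma Aw_succ (n t s : ℕ) : Aw n t (s+1) = asc n s t * Aw n t s := rfl
lemma SA_zero (n t : ℕ) : SA n t 0 = 1 := rfl
lemma SA_succ (n t s : ℕ) : SA n t (s+1) = asc n (s+1) t * SA n t s := rfl
lemma Ew_zero (n t c : ℕ) : Ew n t c 0 = 1 := rfl
lemma Ew_succ (n t c s : ℕ) : Ew n t c (s+1) = dsc n c t * Ew n t (c+1) s := rfl

lemma asc0_succ (n m : ℕ) : asc n 0 (m+1) = asc n 0 m * gen n m := by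
  rw [asc_succ, Nat.zero_add]

lemma dsc_bot (n : ℕ) : ∀ m i, dsc n i (m+1) = dsc n (i+1) m * gen n i := by
  intro m
  induction m with
  | zero => intro i; rw [dsc_succ, dsc_zero, dsc_zero, Nat.add_zero, one_mul, mul_one]
  | succ m ih =>
    intro i
    rw [dsc_succ, ih i, dsc_succ, show i+(m+1) = (i+1)+m from by omega]
    simp only [mul_assoc]

lemma comm_g_asc (n k i m : ℕ) (h : k+2 ≤ i ∨ i+m+1 ≤ k) :
    gen n k * asc n i m = asc n i m * gen n k := by
  induction m with
  | zero => rw [asc_zero, one_mul, mul_one]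
  | succ m ih =>
    have hc : gen n k * gen n (i+m) = gen n (i+m) * gen n k := by
      rcases h with h | h
      · exact braid_comm k (i+m) (by omega)
      · exact (braid_comm (i+m) k (by omega)).symm
    rw [asc_succ, ← mul_assoc, ih (h.imp id (by omega)), mul_assoc, hc, ← mul_assoc]

lemma comm_g_dsc (n k i m : ℕ) (h : k+2 ≤ i ∨ i+m+1 ≤ k) :
    gen n k * dsc n i m = dsc n i m * gen n k := by
  induction m with
  | zero => rw [dsc_zero, one_mul, mul_one]
  | succ m ih =>
    have hc : gen n k * gen n (i+m) = gen n (i+m) * gen n k := by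
      rcases h with h | h
      · exact braid_comm k (i+m) (by omega)
      · exact (braid_comm (i+m) k (by omega)).symm
    rw [dsc_succ, ← mul_assoc, hc, mul_assoc, ih (h.imp id (by omega)), ← mul_assoc]

lemma comm_g_HT (n k off len : ℕ) (h : k+2 ≤ off ∨ off+len+1 ≤ k) :
    gen n k * HT n off len = HT n off len * gen n k := by
  induction len with
  | zero => rw [HT_zero, one_mul, mul_one]
  | succ l ih =>
    have ha : gen n k * asc n off (l+1) = asc n off (l+1) * gen n k :=
      comm_g_asc n k off (l+1) (h.imp id (by omega))
    rw [HT_succ, ← mul_assoc, ha, mul_assoc, ih (h.imp id (by omega)), ← mul_assoc]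

lemma comm_g_Aw (n k t : ℕ) : ∀ s, s + t ≤ k → gen n k * Aw n t s = Aw n t s * gen n k := by
  intro s
  induction s with
  | zero => intro _; rw [Aw_zero, one_mul, mul_one]
  | succ s ih =>
    intro h
    have ha : gen n k * asc n s t = asc n s t * gen n k :=
      comm_g_asc n k s t (Or.inr (by omega))
    rw [Aw_succ, ← mul_assoc, ha, mul_assoc, ih (by omega), ← mul_assoc]

lemma comm_g_SA (n k t : ℕ) : ∀ s, s + t + 1 ≤ k → gen n k * SA n t s = SA n t s * gen n k := by
  intro s
  induction s with
  | zero => intro _; rw [SA_zero, one_mul, mul_one]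
  | succ s ih =>
    intro h
    have ha : gen n k * asc n (s+1) t = asc n (s+1) t * gen n k :=
      comm_g_asc n k (s+1) t (Or.inr (by omega))
    rw [SA_succ, ← mul_assoc, ha, mul_assoc, ih (by omega), ← mul_assoc]

lemma comm_asc_dsc (n i m j r : ℕ) (h : i+m+1 ≤ j ∨ j+r+1 ≤ i) :
    asc n i m * dsc n j r = dsc n j r * asc n i m := by
  induction m with
  | zero => rw [asc_zero, one_mul, mul_one]
  | succ m ih =>
    have hg : gen n (i+m) * dsc n j r = dsc n j r * gen n (i+m) :=
      comm_g_dsc n (i+m) j r (h.imp (by omega) (by omega))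
    rw [asc_succ, mul_assoc, hg, ← mul_assoc, ih (h.imp (by omega) (by omega)), mul_assoc]

lemma comm_asc_HT (n i m off len : ℕ) (h : i+m+1 ≤ off ∨ off+len+1 ≤ i) :
    asc n i m * HT n off len = HT n off len * asc n i m := by
  induction m with
  | zero => rw [asc_zero, one_mul, mul_one]
  | succ m ih =>
    have hg : gen n (i+m) * HT n off len = HT n off len * gen n (i+m) :=
      comm_g_HT n (i+m) off len (h.imp (by omega) (by omega))
    rw [asc_succ, mul_assoc, hg, ← mul_assoc, ih (h.imp (by omega) (by omega)), mul_assoc]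

lemma comm_HT_HT (n o1 o2 l2 : ℕ) : ∀ l1, o1+l1+1 ≤ o2 →
    HT n o1 l1 * HT n o2 l2 = HT n o2 l2 * HT n o1 l1 := by
  intro l1
  induction l1 with
  | zero => intro _; rw [HT_zero, one_mul, mul_one]
  | succ l ih =>
    intro h
    have ha : asc n o1 (l+1) * HT n o2 l2 = HT n o2 l2 * asc n o1 (l+1) :=
      comm_asc_HT n o1 (l+1) o2 l2 (Or.inl (by omega))
    rw [HT_succ, mul_assoc, ih (by omega), ← mul_assoc, ha, mul_assoc]

lemma asc_append (n i a : ℕ) : ∀ b, asc n i (a+b) = asc n i a * asc n (i+a) b := by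
  intro b
  induction b with
  | zero => rw [Nat.add_zero, asc_zero, mul_one]
  | succ b ih =>
    rw [show a+(b+1) = (a+b)+1 from rfl, asc_succ, ih, asc_succ,
      show i+(a+b) = (i+a)+b from by omega, mul_assoc]

lemma slide_asc_g (n i j : ℕ) : ∀ m, i ≤ j → j+2 ≤ i+m → i+m ≤ n-1 →
    asc n i m * gen n j = gen n (j+1) * asc n i m := by
  intro m
  induction m with
  | zero => intro _ h2 _; omega
  | succ m ih =>
    intro h1 h2 h3
    rcases Nat.lt_or_ge (j+2) (i+(m+1)) with hl | hg
    · -- j+2 ≤ i+m : inner case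
      have hc : gen n (i+m) * gen n j = gen n j * gen n (i+m) :=
        (braid_comm j (i+m) (by omega)).symm
      rw [asc_succ, mul_assoc, hc, ← mul_assoc, ih h1 (by omega) (by omega), mul_assoc]
    · -- j+2 = i+m+1, so m = m'+1 and j = i+m'
      obtain ⟨m', rfl⟩ : ∃ m', m = m'+1 := ⟨m-1, by omega⟩
      obtain rfl : j = i + m' := by omega
      have hb : gen n (i+m') * (gen n (i+(m'+1)) * gen n (i+m')) =
          gen n (i+m'+1) * (gen n (i+m') * gen n (i+(m'+1))) := by
        have := braid_rel (n := n) (i+m') (by omega)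
        simp only [mul_assoc] at this
        exact this
      have hc : asc n i m' * gen n (i+m'+1) = gen n (i+m'+1) * asc n i m' :=
        (comm_g_asc n (i+m'+1) i m' (Or.inr (by omega))).symm
      simp only [asc_succ, mul_assoc]
      rw [hb, ← mul_assoc (asc n i m') (gen n (i+m'+1)), hc]
      simp only [mul_assoc]

lemma slide_dsc_g (n i j : ℕ) : ∀ m, i ≤ j → j+2 ≤ i+m → i+m ≤ n-1 →
    dsc n i m * gen n (j+1) = gen n j * dsc n i m := by
  intro m
  induction m with
  | zero => intro _ h2 _; omega
  | succ m ih =>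
    intro h1 h2 h3
    rcases Nat.lt_or_ge (j+2) (i+(m+1)) with hl | hg
    · have hc : gen n (i+m) * gen n j = gen n j * gen n (i+m) :=
        (braid_comm j (i+m) (by omega)).symm
      rw [dsc_succ, mul_assoc, ih h1 (by omega) (by omega), ← mul_assoc, hc, mul_assoc]
    · obtain ⟨m', rfl⟩ : ∃ m', m = m'+1 := ⟨m-1, by omega⟩
      obtain rfl : j = i + m' := by omega
      have hc1 : dsc n i m' * gen n (i+m'+1) = gen n (i+m'+1) * dsc n i m' :=
        (comm_g_dsc n (i+m'+1) i m' (Or.inr (by omega))).symm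
      have hb : gen n (i+(m'+1)) * (gen n (i+m') * gen n (i+m'+1)) =
          gen n (i+m') * (gen n (i+(m'+1)) * gen n (i+m')) := by
        have := (braid_rel (n := n) (i+m') (by omega)).symm
        simp only [mul_assoc] at this
        exact this
      simp only [dsc_succ, mul_assoc]
      rw [hc1, mls3 hb]

lemma slide_asc_asc (n i m j : ℕ) : ∀ r, i ≤ j → j+r+1 ≤ i+m → i+m ≤ n-1 →
    asc n i m * asc n j r = asc n (j+1) r * asc n i m := by
  intro r
  induction r with
  | zero => intro _ _ _; rw [asc_zero, asc_zero, one_mul, mul_one]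
  | succ r ih =>
    intro h1 h2 h3
    rw [asc_succ, asc_succ, ← mul_assoc, ih h1 (by omega) h3, mul_assoc,
      slide_asc_g n i (j+r) m (by omega) (by omega) h3,
      show (j+1)+r = j+r+1 from by omega, ← mul_assoc]

lemma slide_asc_dsc (n i m j : ℕ) : ∀ r, i ≤ j → j+r+1 ≤ i+m → i+m ≤ n-1 →
    asc n i m * dsc n j r = dsc n (j+1) r * asc n i m := by
  intro r
  induction r with
  | zero => intro _ _ _; rw [dsc_zero, dsc_zero, one_mul, mul_one]
  | succ r ih =>
    intro h1 h2 h3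
    rw [dsc_succ, dsc_succ, ← mul_assoc,
      show (j+1)+r = j+r+1 from by omega, mul_assoc]
    rw [mls (slide_asc_g n i (j+r) m (by omega) (by omega) h3)]
    rw [ih h1 (by omega) h3]
    simp only [mul_assoc]

lemma slide_asc_HT (n i m off : ℕ) : ∀ len, i ≤ off → off+len+1 ≤ i+m → i+m ≤ n-1 →
    asc n i m * HT n off len = HT n (off+1) len * asc n i m := by
  intro len
  induction len with
  | zero => intro _ _ _; rw [HT_zero, HT_zero, one_mul, mul_one]
  | succ l ih =>
    intro h1 h2 h3
    rw [HT_succ, HT_succ]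
    simp only [mul_assoc]
    rw [mls (slide_asc_asc n i m off (l+1) h1 (by omega) h3)]
    rw [ih h1 (by omega) h3]

lemma slide_asc_Aw (n M t : ℕ) (hM : M ≤ n-1) : ∀ s, s+t ≤ M →
    asc n 0 M * Aw n t s = SA n t s * asc n 0 M := by
  intro s
  induction s with
  | zero => intro _; rw [Aw_zero, SA_zero, one_mul, mul_one]
  | succ s ih =>
    intro h
    have hs : asc n 0 M * asc n s t = asc n (s+1) t * asc n 0 M :=
      slide_asc_asc n 0 M s t (Nat.zero_le _) (by omega) (by omega)
    rw [Aw_succ, SA_succ, ← mul_assoc, hs, mul_assoc, ih (by omega), ← mul_assoc]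

lemma HT_alt (n off : ℕ) : ∀ m, off+(m+1) ≤ n-1 →
    HT n off (m+1) = HT n off m * dsc n off (m+1) := by
  intro m
  induction m with
  | zero =>
    intro _
    rw [HT_succ, HT_zero, asc_succ, asc_zero, dsc_succ, dsc_zero, mul_one, one_mul, one_mul, mul_one]
  | succ m ih =>
    intro h
    have hc : HT n off m * gen n (off+(m+1)) = gen n (off+(m+1)) * HT n off m :=
      (comm_g_HT n (off+(m+1)) off m (Or.inr (by omega))).symm
    conv_lhs => rw [HT_succ, asc_succ]
    conv_rhs => rw [HT_succ, dsc_succ]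
    simp only [mul_assoc]
    rw [mls hc, ← ih (by omega)]

lemma rev (n off : ℕ) : ∀ m i j, i+j+1 = m → off+m ≤ n-1 →
    HT n off m * gen n (off+i) = gen n (off+j) * HT n off m := by
  intro m
  induction m with
  | zero => intro i j hij _; omega
  | succ m' ih =>
    intro i j hij h3
    rcases j with _ | j'
    · -- j = 0, i = m'
      rw [show i = m' from by omega]
      rcases Nat.eq_zero_or_pos m' with rfl | hpos
      · -- m' = 0
        rw [HT_succ, HT_zero, asc_succ, asc_zero, mul_one, one_mul, Nat.add_zero]
      · -- m' = m''+1
        obtain ⟨m'', rfl⟩ : ∃ m'', m' = m''+1 := ⟨m'-1, by omega⟩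
        rw [HT_alt n off (m''+1) (by omega)]
        simp only [mul_assoc]
        have hs : dsc n off (m''+1+1) * gen n (off+(m''+1)) =
            gen n (off+m'') * dsc n off (m''+1+1) :=
          slide_dsc_g n off (off+m'') (m''+1+1) (by omega) (by omega) (by omega)
        rw [hs]
        have hI : HT n off (m''+1) * gen n (off+m'') = gen n (off+0) * HT n off (m''+1) :=
          ih m'' 0 (by omega) (by omega)
        rw [← mul_assoc, hI, mul_assoc]
    · -- j = j'+1, i ≤ m'-1
      rw [HT_succ]
      simp only [mul_assoc]
      rw [ih i j' (by omega) (by omega)]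
      have hs : asc n off (m'+1) * gen n (off+j') = gen n (off+j'+1) * asc n off (m'+1) :=
        slide_asc_g n off (off+j') (m'+1) (by omega) (by omega) (by omega)
      rw [mls hs]
      rfl

lemma rev' (n off m i j : ℕ) (hij : i+j+1 = m) (h : off+m ≤ n-1) :
    gen n (off+i) * HT n off m = HT n off m * gen n (off+j) :=
  (rev n off m j i (by omega) h).symm

lemma bar_asc (n M : ℕ) (hM : M ≤ n-1) : ∀ m i c, i+m+c = M →
    asc n i m * HT n 0 M = HT n 0 M * dsc n c m := by
  intro m
  induction m with
  | zero => intro i c _; rw [asc_zero, dsc_zero, one_mul, mul_one]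
  | succ m ih =>
    intro i c h
    have hrev : gen n (i+m) * HT n 0 M = HT n 0 M * gen n c := by
      have := rev' n 0 M (i+m) c (by omega) (by omega)
      rwa [Nat.zero_add, Nat.zero_add] at this
    rw [asc_succ, mul_assoc, hrev, ← mul_assoc, ih i (c+1) (by omega), mul_assoc,
      ← dsc_bot n m c]

lemma barw (n M : ℕ) (hM : M ≤ n-1) : ∀ s t c, c+s+t = M+1 →
    Aw n t s * HT n 0 M = HT n 0 M * Ew n t c s := by
  intro s
  induction s with
  | zero => intro t c _; rw [Aw_zero, Ew_zero, one_mul, mul_one]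
  | succ s ih =>
    intro t c h
    have hb : asc n s t * HT n 0 M = HT n 0 M * dsc n c t :=
      bar_asc n M hM t s c (by omega)
    rw [Aw_succ, Ew_succ, mul_assoc, ih t (c+1) (by omega), ← mul_assoc, hb, mul_assoc]

lemma Ew_snoc (n t : ℕ) : ∀ s c, Ew n t c (s+1) = Ew n t c s * dsc n (c+s) t := by
  intro s
  induction s with
  | zero =>
    intro c
    rw [Ew_succ, Ew_zero, Ew_zero, mul_one, one_mul, Nat.add_zero]
  | succ s ih =>
    intro c
    rw [Ew_succ, ih (c+1), Ew_succ, show c+1+s = c+(s+1) from by omega, mul_assoc]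

lemma Aw_len_zero (n : ℕ) : ∀ s, Aw n 0 s = 1 := by
  intro s
  induction s with
  | zero => rfl
  | succ s ih => rw [Aw_succ, asc_zero, ih, one_mul]

lemma SA_len_zero (n : ℕ) : ∀ s, SA n 0 s = 1 := by
  intro s
  induction s with
  | zero => rfl
  | succ s ih => rw [SA_succ, asc_zero, ih, one_mul]

lemma Aw_ext (n : ℕ) : ∀ s t, Aw n (t+1) s = Aw n t s * dsc n t s := by
  intro s
  induction s with
  | zero => intro t; rw [Aw_zero, Aw_zero, dsc_zero, mul_one]
  | succ s ih =>
    intro t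
    have hc : gen n (s+t) * Aw n t s = Aw n t s * gen n (s+t) :=
      comm_g_Aw n (s+t) t s (le_refl _)
    rw [Aw_succ, Aw_succ, dsc_succ, asc_succ, ih t, show t+s = s+t from by omega]
    simp only [mul_assoc]
    rw [mls hc]

lemma Ew_eq_Aw (n t : ℕ) : ∀ s, Ew n t 0 s = Aw n s t := by
  intro s
  induction s with
  | zero => rw [Ew_zero, Aw_len_zero]
  | succ s ih =>
    rw [Ew_snoc, ih, show (0:ℕ)+s = s from by omega, ← Aw_ext]

lemma SA_ext (n : ℕ) : ∀ s t, SA n (t+1) s = SA n t s * dsc n (t+1) s := by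
  intro s
  induction s with
  | zero => intro t; rw [SA_zero, SA_zero, dsc_zero, mul_one]
  | succ s ih =>
    intro t
    have hc : gen n (s+1+t) * SA n t s = SA n t s * gen n (s+1+t) :=
      comm_g_SA n (s+1+t) t s (by omega)
    rw [SA_succ, SA_succ, ih t, dsc_succ, asc_succ, show t+1+s = s+1+t from by omega]
    simp only [mul_assoc]
    rw [mls hc]

lemma slide_special (n : ℕ) : ∀ r j, j+r+1 ≤ n-1 →
    asc n 0 (j+r) * (dsc n (j+1) r * gen n j) = dsc n (j+1) r * asc n 0 (j+r+1) := by
  intro r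
  rcases r with _ | r'
  · intro j h
    rw [dsc_zero, one_mul, one_mul, Nat.add_zero, ← asc0_succ]
  · intro j h
    conv_lhs => rw [dsc_succ, show j+(r'+1) = j+r'+1 from rfl,
      show (j+1)+r' = j+r'+1 from by omega]
    have hstep : asc n 0 (j+r'+1) * (gen n (j+r'+1) * (dsc n (j+1) r' * gen n j)) =
        asc n 0 (j+r'+1+1) * (dsc n (j+1) r' * gen n j) := by
      rw [← mul_assoc, ← asc0_succ]
    rw [mul_assoc, hstep]
    have hs : asc n 0 (j+r'+1+1) * dsc n (j+1) r' = dsc n (j+1+1) r' * asc n 0 (j+r'+1+1) :=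
      slide_asc_dsc n 0 (j+r'+1+1) (j+1) r' (by omega) (by omega) (by omega)
    rw [← mul_assoc, hs, mul_assoc]
    have hg : asc n 0 (j+r'+1+1) * gen n j = gen n (j+1) * asc n 0 (j+r'+1+1) :=
      slide_asc_g n 0 j (j+r'+1+1) (by omega) (by omega) (by omega)
    rw [hg, ← mul_assoc, ← dsc_bot n r' (j+1)]
    rw [show j+(r'+1)+1 = j+r'+1+1 from rfl]

lemma Klem (n : ℕ) : ∀ t s, s+t ≤ n-1 →
    asc n 0 s * (SA n t s * asc n 0 t) = SA n t s * asc n 0 (s+t) := by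
  intro t
  induction t with
  | zero =>
    intro s _
    rw [SA_len_zero, asc_zero, one_mul, mul_one, one_mul, Nat.add_zero]
  | succ t ih =>
    intro s h
    rw [SA_ext n s t, asc0_succ]
    simp only [mul_assoc]
    have hc : dsc n (t+1) s * asc n 0 t = asc n 0 t * dsc n (t+1) s :=
      (comm_asc_dsc n 0 t (t+1) s (Or.inl (by omega))).symm
    rw [mls hc]
    rw [mls2 (ih s (by omega))]
    rw [show s+t = t+s from by omega]
    have he : asc n 0 (t+s) * (dsc n (t+1) s * gen n t) = dsc n (t+1) s * asc n 0 (t+s+1) :=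
      slide_special n s t (by omega)
    rw [he, show s+(t+1) = t+s+1 from by omega]

lemma Aw_alt (n t : ℕ) : ∀ s, Aw n t (s+1) = SA n t s * asc n 0 t := by
  intro s
  induction s with
  | zero => rw [Aw_succ, Aw_zero, SA_zero, mul_one, one_mul]
  | succ s ih => rw [Aw_succ, ih, ← mul_assoc, ← SA_succ]

lemma Hbase (n : ℕ) : ∀ v, v+1 ≤ n-1 → HT n 0 (v+1) = HT n 1 v * asc n 0 (v+1) := by
  intro v
  induction v with
  | zero => intro _; rw [HT_succ, HT_zero, HT_zero, mul_one, one_mul]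
  | succ v ih =>
    intro h
    rw [HT_succ (m := v+1), ih (by omega)]
    have hs1 : asc n 0 (v+1+1) * HT n 1 v = HT n 2 v * asc n 0 (v+1+1) :=
      slide_asc_HT n 0 (v+1+1) 1 v (by omega) (by omega) (by omega)
    rw [mls hs1]
    have hs2 : asc n 0 (v+1+1) * asc n 0 (v+1) = asc n 1 (v+1) * asc n 0 (v+1+1) :=
      slide_asc_asc n 0 (v+1+1) 0 (v+1) (by omega) (by omega) (by omega)
    rw [hs2]
    have hs3 : asc n 1 (v+1) * HT n 1 v = HT n 2 v * asc n 1 (v+1) :=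
      slide_asc_HT n 1 (v+1) 1 v (by omega) (by omega) (by omega)
    rw [HT_succ]
    simp only [mul_assoc]
    rw [mls hs3]

lemma Hmain (n : ℕ) : ∀ u v, u+v+1 ≤ n-1 →
    HT n 0 (u+v+1) = HT n 0 u * (HT n (u+1) v * Aw n (v+1) (u+1)) := by
  intro u
  induction u with
  | zero =>
    intro v h
    rw [Nat.zero_add, Nat.zero_add, HT_zero, one_mul, Aw_succ, Aw_zero, mul_one,
      ]
    exact Hbase n v (by omega)
  | succ u ih =>
    intro v h
    rw [show u+1+v+1 = (u+v+1)+1 from by omega, HT_succ,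
      show (u+v+1)+1 = u+v+1+1 from rfl, ih v (by omega)]
    have hs1 : asc n 0 (u+v+1+1) * HT n 0 u = HT n 1 u * asc n 0 (u+v+1+1) :=
      slide_asc_HT n 0 (u+v+1+1) 0 u (by omega) (by omega) (by omega)
    have hs2 : asc n 0 (u+v+1+1) * HT n (u+1) v = HT n (u+1+1) v * asc n 0 (u+v+1+1) :=
      slide_asc_HT n 0 (u+v+1+1) (u+1) v (by omega) (by omega) (by omega)
    have hs3 : asc n 0 (u+v+1+1) * Aw n (v+1) (u+1) = SA n (v+1) (u+1) * asc n 0 (u+v+1+1) :=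
      slide_asc_Aw n (u+v+1+1) (v+1) (by omega) (u+1) (by omega)
    rw [mls hs1, mls hs2, hs3]
    -- RHS side
    rw [Hbase n u (by omega), Aw_alt n (v+1) (u+1)]
    have hc : asc n 0 (u+1) * HT n (u+1+1) v = HT n (u+1+1) v * asc n 0 (u+1) :=
      comm_asc_HT n 0 (u+1) (u+1+1) v (Or.inl (by omega))
    simp only [mul_assoc]
    rw [mls hc]
    have hk : asc n 0 (u+1) * (SA n (v+1) (u+1) * asc n 0 (v+1)) =
        SA n (v+1) (u+1) * asc n 0 (u+1+(v+1)) :=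
      Klem n (v+1) (u+1) (by omega)
    rw [hk, show u+1+(v+1) = u+v+1+1 from by omega]

lemma asc_list (n i : ℕ) : ∀ m, ((List.range m).map (fun t => gen n (i+t))).prod = asc n i m := by
  intro m
  induction m with
  | zero => simp [asc_zero]
  | succ m ih =>
    rw [List.range_succ, List.map_append, List.prod_append, ih, List.map_singleton,
      List.prod_singleton, asc_succ]

lemma halfTwist_succ (n off len : ℕ) : halfTwist n off (len+1) =
    (((List.range (len+1)).map (fun t => gen n (off+t))).prod) * halfTwist n off len := by
  unfold halfTwist
  rw [List.range_succ, List.reverse_append, List.reverse_singleton, List.singleton_append,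
    List.map_cons, List.flatten_cons, List.prod_append, List.range_succ]

lemma halfTwist_eq (n off : ℕ) : ∀ len, halfTwist n off len = HT n off len := by
  intro len
  induction len with
  | zero => simp [halfTwist, HT_zero]
  | succ len ih => rw [halfTwist_succ, asc_list, ih, HT_succ]

lemma listSA (n t : ℕ) : ∀ s,
    ((List.range s).map (fun a => ((List.range t).map (fun x => gen n (s-a+x))).prod)).prod
      = SA n t s := by
  intro s
  induction s with
  | zero => simp [SA_zero]
  | succ s ih =>
    rw [List.range_succ_eq_map, List.map_cons, List.prod_cons, List.map_map]
    simp only [Function.comp_def, Nat.succ_eq_add_one, Nat.add_sub_add_right, Nat.sub_zero]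
    rw [asc_list, ih, ← SA_succ]

lemma listAw (n t : ℕ) : ∀ s,
    ((List.range s).map (fun a => ((List.range t).map (fun x => gen n (s-1-a+x))).prod)).prod
      = Aw n t s := by
  intro s
  rcases s with _ | s
  · simp [Aw_zero]
  · simp only [Nat.add_sub_cancel]
    rw [List.range_succ, List.map_append, List.prod_append, listSA, List.map_singleton,
      List.prod_singleton]
    simp only [Nat.sub_self]
    rw [asc_list, ← Aw_alt]

lemma HT_congr (n off : ℕ) {l1 l2 : ℕ} (h : l1 = l2) : HT n off l1 = HT n off l2 := by rw [h]

/-- For `p, q ≥ 1`, in `B_{p+q}`: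
`∇_{p+q} = ∇_{1,p} ∇_{p+1,p+q} ·
(σ_p ⋯ σ_{p+q−1})(σ_{p−1} ⋯ σ_{p+q−2}) ⋯ (σ_1 ⋯ σ_q) ·
(σ_q ⋯ σ_{q+p−1})(σ_{q−1} ⋯ σ_{q+p−2}) ⋯ (σ_1 ⋯ σ_p)`. -/
theorem stmt_5 (p q : ℕ) (hp : 1 ≤ p) (hq : 1 ≤ q) :
    fullTwistOn (p + q) 0 (p + q - 1) =
      fullTwistOn (p + q) 0 (p - 1) * fullTwistOn (p + q) p (q - 1) *
      ((List.range p).map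
        (fun a => ((List.range q).map (fun t => gen (p + q) (p - 1 - a + t))).prod)).prod *
      ((List.range q).map
        (fun b => ((List.range p).map (fun t => gen (p + q) (q - 1 - b + t))).prod)).prod := by
  obtain ⟨u, rfl⟩ : ∃ u, p = u+1 := ⟨p-1, by omega⟩
  obtain ⟨v, rfl⟩ : ∃ v, q = v+1 := ⟨q-1, by omega⟩
  simp only [fullTwistOn, halfTwist_eq]
  rw [listAw (u+1+(v+1)) (v+1) (u+1), listAw (u+1+(v+1)) (u+1) (v+1)]
  rw [HT_congr (u+1+(v+1)) 0 (show u+1+(v+1)-1 = u+v+1 from by omega),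
    HT_congr (u+1+(v+1)) 0 (show u+1-1 = u from by omega),
    HT_congr (u+1+(v+1)) (u+1) (show v+1-1 = v from by omega)]
  have hbar : Aw (u+1+(v+1)) (v+1) (u+1) * HT (u+1+(v+1)) 0 (u+v+1) =
      HT (u+1+(v+1)) 0 (u+v+1) * Aw (u+1+(v+1)) (u+1) (v+1) := by
    have h1 := barw (u+1+(v+1)) (u+v+1) (by omega) (u+1) (v+1) 0 (by omega)
    rw [Ew_eq_Aw] at h1
    exact h1
  have hcomm : HT (u+1+(v+1)) (u+1) v * HT (u+1+(v+1)) 0 u =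
      HT (u+1+(v+1)) 0 u * HT (u+1+(v+1)) (u+1) v :=
    (comm_HT_HT (u+1+(v+1)) 0 (u+1) v u (by omega)).symm
  nth_rewrite 1 [Hmain (u+1+(v+1)) u v (by omega)]
  simp only [mul_assoc]
  rw [hbar]
  rw [Hmain (u+1+(v+1)) u v (by omega)]
  simp only [mul_assoc]
  rw [mls hcomm]
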